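/- Let N ≥ 1 and z ≠ q^{-n} for 1 ≤ n ≤ N. Then ∑_{n=1}^{N} [N choose n] (-1)^{n-1} z^n q^{n(n+1)/2} (q;q)_n / ((1-q^n)(zq;q)_n) = ∑_{n=1}^{N} z q^n/(1 - z q^n). (Finite analogue of Ramanujan's identity.) -/

import Mathlib

open Finset

/-- q-Pochhammer symbol (a;q)_n = ∏_{k=0}^{n-1} (1 - a q^k). -/
noncomputable def qP (a q : ℂ) (n : ℕ) : ℂ := ∏ k ∈ Finset.range n, (1 - a * q ^ k)

/-- Gaussian (q-)binomial coefficient [N choose n]_q. -/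
noncomputable def qBinom (q : ℂ) (N n : ℕ) : ℂ := qP q q N / (qP q q n * qP q q (N - n))

lemma one_sub_q_pow_ne_zero (q : ℂ) (hq : ‖q‖ < 1) (n : ℕ) (hn : 1 ≤ n) :
    (1 : ℂ) - q ^ n ≠ 0 := by
  intro h
  have h1 : q ^ n = 1 := by linear_combination -h
  have h2 : ‖q ^ n‖ < 1 := by
    rw [norm_pow]
    exact pow_lt_one₀ (norm_nonneg q) hq (by omega)
  rw [h1] at h2; simp at h2

lemma qP_zero (a q : ℂ) : qP a q 0 = 1 := by simp [qP]

lemma qP_one (a q : ℂ) : qP a q 1 = 1 - a := by simp [qP]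

lemma qP_succ (a q : ℂ) (n : ℕ) : qP a q (n+1) = qP a q n * (1 - a * q ^ n) := by
  simp [qP, Finset.prod_range_succ]

lemma qP_succ' (a q : ℂ) (n : ℕ) : qP a q (n+1) = (1 - a) * qP (a*q) q n := by
  rw [qP, Finset.prod_range_succ', qP, mul_comm]
  congr 1
  · simp
  · exact Finset.prod_congr rfl (fun k _ => by ring_nf)

lemma qP_qq_ne_zero (q : ℂ) (hq : ‖q‖ < 1) (n : ℕ) : qP q q n ≠ 0 := by
  rw [qP]
  apply Finset.prod_ne_zero_iff.mpr
  intro k _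
  have h := one_sub_q_pow_ne_zero q hq (k+1) (by omega)
  rwa [pow_succ'] at h

lemma qP_zq_ne_zero (q z : ℂ) (n N : ℕ) (hn : n ≤ N)
    (hz : ∀ j, 1 ≤ j → j ≤ N → z * q ^ j ≠ 1) : qP (z*q) q n ≠ 0 := by
  rw [qP]
  apply Finset.prod_ne_zero_iff.mpr
  intro k hk
  simp only [Finset.mem_range] at hk
  have h := hz (k+1) (by omega) (by omega)
  intro hc
  apply h
  have h2 : z * q ^ (k+1) = z * q * q ^ k := by ring
  rw [h2]
  linear_combination -hc

lemma qBinom_zero (q : ℂ) (hq : ‖q‖ < 1) (K : ℕ) : qBinom q K 0 = 1 := by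
  rw [qBinom, qP_zero, Nat.sub_zero, one_mul, div_self (qP_qq_ne_zero q hq K)]

lemma qBinom_self (q : ℂ) (hq : ‖q‖ < 1) (K : ℕ) : qBinom q K K = 1 := by
  rw [qBinom, Nat.sub_self, qP_zero, mul_one, div_self (qP_qq_ne_zero q hq K)]

lemma pascal1 (q : ℂ) (hq : ‖q‖ < 1) (m k : ℕ) :
    qBinom q (m+k+2) (m+1) = qBinom q (m+k+1) m + q^(m+1) * qBinom q (m+k+1) (m+1) := by
  have hm : (m+k+2) - (m+1) = k+1 := by omega
  have hm2 : (m+k+1) - m = k+1 := by omega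
  have hm3 : (m+k+1) - (m+1) = k := by omega
  rw [qBinom, qBinom, qBinom, hm, hm2, hm3]
  rw [show m+k+2 = (m+k+1)+1 from rfl, qP_succ q q (m+k+1), qP_succ q q m, qP_succ q q k]
  have h1 := qP_qq_ne_zero q hq m
  have h2 := qP_qq_ne_zero q hq k
  have h3 := qP_qq_ne_zero q hq (m+k+1)
  have h4 : (1 : ℂ) - q * q^m ≠ 0 := by
    have h := one_sub_q_pow_ne_zero q hq (m+1) (by omega); rwa [pow_succ'] at h
  have h5 : (1 : ℂ) - q * q^k ≠ 0 := by
    have h := one_sub_q_pow_ne_zero q hq (k+1) (by omega); rwa [pow_succ'] at h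
  field_simp
  ring

lemma pascal1' (q : ℂ) (hq : ‖q‖ < 1) (M m : ℕ) (h : m < M) :
    qBinom q (M+1) (m+1) = qBinom q M m + q^(m+1) * qBinom q M (m+1) := by
  obtain ⟨k, rfl⟩ : ∃ k, M = m + k + 1 := ⟨M - m - 1, by omega⟩
  exact pascal1 q hq m k

lemma pascal2 (q : ℂ) (hq : ‖q‖ < 1) (m k : ℕ) :
    qBinom q (m+k+2) (m+1) = qBinom q (m+k+1) (m+1) + q^(k+1) * qBinom q (m+k+1) m := by
  have hm : (m+k+2) - (m+1) = k+1 := by omega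
  have hm2 : (m+k+1) - m = k+1 := by omega
  have hm3 : (m+k+1) - (m+1) = k := by omega
  rw [qBinom, qBinom, qBinom, hm, hm2, hm3]
  rw [show m+k+2 = (m+k+1)+1 from rfl, qP_succ q q (m+k+1), qP_succ q q m, qP_succ q q k]
  have h1 := qP_qq_ne_zero q hq m
  have h2 := qP_qq_ne_zero q hq k
  have h3 := qP_qq_ne_zero q hq (m+k+1)
  have h4 : (1 : ℂ) - q * q^m ≠ 0 := by
    have h := one_sub_q_pow_ne_zero q hq (m+1) (by omega); rwa [pow_succ'] at h
  have h5 : (1 : ℂ) - q * q^k ≠ 0 := by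
    have h := one_sub_q_pow_ne_zero q hq (k+1) (by omega); rwa [pow_succ'] at h
  field_simp
  ring

lemma pascal2' (q : ℂ) (hq : ‖q‖ < 1) (N n : ℕ) (h1 : 1 ≤ n) (h2 : n ≤ N) :
    qBinom q (N+1) n = qBinom q N n + q^(N+1-n) * qBinom q N (n-1) := by
  obtain ⟨m, rfl⟩ : ∃ m, n = m + 1 := ⟨n - 1, by omega⟩
  obtain ⟨k, rfl⟩ : ∃ k, N = m + k + 1 := ⟨N - m - 1, by omega⟩
  have e1 : m + k + 1 + 1 - (m+1) = k + 1 := by omega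
  have e2 : m + 1 - 1 = m := by omega
  rw [e1, e2]
  exact pascal2 q hq m k

lemma tri_succ (m : ℕ) : (m+1)*(m+1+1)/2 = m*(m+1)/2 + (m+1) := by
  obtain ⟨r, hr⟩ := Nat.even_mul_succ_self m
  have h2 : (m+1)*(m+1+1) = m*(m+1) + 2*(m+1) := by ring
  omega

lemma keyL (q : ℂ) (hq : ‖q‖ < 1) :
    ∀ (M : ℕ) (z : ℂ), (∀ j, 1 ≤ j → j ≤ M+1 → z * q ^ j ≠ 1) →
    ∑ m ∈ Finset.range (M+1),
      (-1)^m * q^(m*(m+1)/2) * qBinom q M m * qP q q m * z^m / qP (z*q) q (m+1)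
      = 1 / (1 - z * q^(M+1)) := by
  intro M
  induction M with
  | zero =>
    intro z hz
    simp [qBinom, qP]
  | succ M ih =>
    intro z hz
    have hz' : ∀ j, 1 ≤ j → j ≤ M+1 → (z*q) * q^j ≠ 1 := by
      intro j h1 h2 hc
      apply hz (j+1) (by omega) (by omega)
      have h3 : z * q ^ (j+1) = z * q * q ^ j := by ring
      rw [h3]; exact hc
    have IH := ih (z*q) hz'
    set T : ℕ → ℂ := fun m => (-1)^m * q^(m*(m+1)/2) * qP q q m * z^m / qP (z*q) q (m+1) with hT
    have hstep : (∑ m ∈ Finset.range (M+2),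
        (-1)^m * q^(m*(m+1)/2) * qBinom q (M+1) m * qP q q m * z^m / qP (z*q) q (m+1))
        = ∑ m ∈ Finset.range (M+1), qBinom q M m * (q^m * T m + T (m+1)) := by
      have e0 : ∀ m, (-1:ℂ)^m * q^(m*(m+1)/2) * qBinom q (M+1) m * qP q q m * z^m / qP (z*q) q (m+1)
          = qBinom q (M+1) m * T m := by intro m; rw [hT]; ring
      calc ∑ m ∈ Finset.range (M+2),
            (-1)^m * q^(m*(m+1)/2) * qBinom q (M+1) m * qP q q m * z^m / qP (z*q) q (m+1)
          = ∑ m ∈ Finset.range (M+2), qBinom q (M+1) m * T m :=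
            Finset.sum_congr rfl (fun m _ => e0 m)
        _ = (∑ m ∈ Finset.range (M+1), qBinom q (M+1) m * T m)
              + qBinom q (M+1) (M+1) * T (M+1) := Finset.sum_range_succ _ _
        _ = ((∑ m ∈ Finset.range M, qBinom q (M+1) (m+1) * T (m+1))
              + qBinom q (M+1) 0 * T 0) + qBinom q (M+1) (M+1) * T (M+1) := by
            rw [Finset.sum_range_succ']
        _ = ((∑ m ∈ Finset.range M, (qBinom q M m * T (m+1)
              + q^(m+1) * qBinom q M (m+1) * T (m+1))) + T 0) + T (M+1) := by
            rw [qBinom_zero q hq, qBinom_self q hq, one_mul, one_mul]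
            congr 2
            apply Finset.sum_congr rfl
            intro m hm
            rw [pascal1' q hq M m (Finset.mem_range.mp hm)]
            ring
        _ = ((∑ m ∈ Finset.range M, qBinom q M m * T (m+1)) + qBinom q M M * T (M+1))
            + ((∑ m ∈ Finset.range M, q^(m+1) * qBinom q M (m+1) * T (m+1))
               + q^0 * qBinom q M 0 * T 0) := by
            rw [Finset.sum_add_distrib, qBinom_self q hq, qBinom_zero q hq]
            ring
        _ = (∑ m ∈ Finset.range (M+1), qBinom q M m * T (m+1))
            + (∑ m ∈ Finset.range (M+1), q^m * qBinom q M m * T m) := by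
            rw [Finset.sum_range_succ (fun m => qBinom q M m * T (m+1)),
                Finset.sum_range_succ' (fun m => q^m * qBinom q M m * T m)]
        _ = ∑ m ∈ Finset.range (M+1), qBinom q M m * (q^m * T m + T (m+1)) := by
            rw [← Finset.sum_add_distrib]
            apply Finset.sum_congr rfl
            intro m _
            ring
    rw [hstep]
    have hterm : ∀ m ∈ Finset.range (M+1), qBinom q M m * (q^m * T m + T (m+1))
        = (-1)^m * q^(m*(m+1)/2) * qBinom q M m * qP q q m * (z*q)^m / qP ((z*q)*q) q (m+1) := by
      intro m hm
      have hmM := Finset.mem_range.mp hm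
      have hD1 : qP (z*q) q (m+1) ≠ 0 :=
        qP_zq_ne_zero q z (m+1) (M+2) (by omega) hz
      have hD2 : qP (z*q) q (m+2) ≠ 0 :=
        qP_zq_ne_zero q z (m+2) (M+2) (by omega) hz
      have h1z : (1 : ℂ) - z*q ≠ 0 := by
        intro hc; apply hz 1 (by omega) (by omega)
        rw [pow_one]; linear_combination -hc
      have hQ : qP ((z*q)*q) q (m+1) ≠ 0 := by
        intro hc
        apply hD2
        rw [show m+2 = (m+1)+1 from rfl, qP_succ' (z*q) q (m+1), hc, mul_zero]
      have hE : (1 : ℂ) - (z*q) * q^(m+1) ≠ 0 := by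
        intro hc; apply hz (m+2) (by omega) (by omega)
        have h3 : z * q^(m+2) = z*q*q^(m+1) := by ring
        rw [h3]; linear_combination -hc
      have hrel : qP (z*q) q (m+1) * (1 - (z*q)*q^(m+1)) = (1 - z*q) * qP ((z*q)*q) q (m+1) := by
        rw [← qP_succ (z*q) q (m+1), qP_succ' (z*q) q (m+1)]
      have hscalar : (1:ℂ)/qP (z*q) q (m+1)
          - q*(1 - q*q^m)*z/(qP (z*q) q (m+1) * (1 - (z*q)*q^(m+1)))
          = 1/qP ((z*q)*q) q (m+1) := by
        rw [div_sub_div _ _ hD1 (by exact mul_ne_zero hD1 hE)]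
        rw [div_eq_div_iff (by exact mul_ne_zero hD1 (mul_ne_zero hD1 hE)) hQ]
        linear_combination (-qP (z*q) q (m+1)) * hrel
      rw [hT]
      simp only
      rw [tri_succ m, pow_add, show m+1+1 = (m+1)+1 from rfl, qP_succ q q m, qP_succ (z*q) q (m+1)]
      linear_combination (qBinom q M m * (-1)^m * q^(m*(m+1)/2) * qP q q m * z^m * q^m) * hscalar
    rw [Finset.sum_congr rfl hterm, IH]
    have h4 : (z*q) * q^(M+1) = z * q^(M+1+1) := by ring
    rw [h4]

/-- Finite analogue of Ramanujan's identity. -/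
theorem stmt_4 (N : ℕ) (hN : 1 ≤ N) (q z : ℂ) (hq : ‖q‖ < 1)
    (hz : ∀ n, 1 ≤ n → n ≤ N → z * q ^ n ≠ 1) :
    ∑ n ∈ Finset.Icc 1 N,
        qBinom q N n * ((-1) ^ (n - 1) * z ^ n * q ^ (n * (n + 1) / 2) * qP q q n /
          ((1 - q ^ n) * qP (z * q) q n)) =
      ∑ n ∈ Finset.Icc 1 N, z * q ^ n / (1 - z * q ^ n) := by
  induction N, hN using Nat.le_induction with
  | base =>
    rw [Finset.Icc_self, Finset.sum_singleton, Finset.sum_singleton, qBinom_self q hq]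
    have h1 : (1:ℂ) - q ≠ 0 := by
      have h := one_sub_q_pow_ne_zero q hq 1 (le_refl 1); rwa [pow_one] at h
    have h2 : (1:ℂ) - z*q ≠ 0 := by
      intro hc
      exact hz 1 (le_refl 1) (le_refl 1) (by rw [pow_one]; linear_combination -hc)
    norm_num [qP_one]
    field_simp
  | succ N hN ih =>
    have hzN : ∀ n, 1 ≤ n → n ≤ N → z*q^n ≠ 1 := fun n a b => hz n a (by omega)
    have IH := ih hzN
    rw [Finset.sum_Icc_succ_top (by omega : 1 ≤ N+1), Finset.sum_Icc_succ_top (by omega : 1 ≤ N+1)]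
    have hsplit : ∀ n ∈ Finset.Icc 1 N,
        qBinom q (N+1) n * ((-1) ^ (n - 1) * z ^ n * q ^ (n * (n + 1) / 2) * qP q q n /
          ((1 - q ^ n) * qP (z * q) q n))
        = qBinom q N n * ((-1) ^ (n - 1) * z ^ n * q ^ (n * (n + 1) / 2) * qP q q n /
          ((1 - q ^ n) * qP (z * q) q n))
          + q^(N+1-n) * qBinom q N (n-1) * ((-1) ^ (n - 1) * z ^ n * q ^ (n * (n + 1) / 2) * qP q q n /
          ((1 - q ^ n) * qP (z * q) q n)) := by
      intro n hn
      have hn' := Finset.mem_Icc.mp hn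
      rw [pascal2' q hq N n hn'.1 hn'.2]
      ring
    rw [Finset.sum_congr rfl hsplit, Finset.sum_add_distrib, IH, add_assoc]
    congr 1
    rw [qBinom_self q hq]
    calc (∑ n ∈ Finset.Icc 1 N, q^(N+1-n) * qBinom q N (n-1) *
            ((-1) ^ (n - 1) * z ^ n * q ^ (n * (n + 1) / 2) * qP q q n /
              ((1 - q ^ n) * qP (z * q) q n)))
          + 1 * ((-1) ^ (N+1 - 1) * z ^ (N+1) * q ^ ((N+1) * (N+1 + 1) / 2) * qP q q (N+1) /
              ((1 - q ^ (N+1)) * qP (z * q) q (N+1)))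
        = ∑ m ∈ Finset.range (N+1), q^(N-m) * qBinom q N m *
            ((-1) ^ m * z ^ (m+1) * q ^ ((m+1) * (m+1 + 1) / 2) * qP q q (m+1) /
              ((1 - q ^ (m+1)) * qP (z * q) q (m+1))) := by
          rw [← Finset.Ico_add_one_right_eq_Icc, Finset.sum_Ico_eq_sum_range, Finset.sum_range_succ]
          congr 1
          · apply Finset.sum_congr (by rw [Nat.add_sub_cancel])
            intro i hi
            have e1 : N+1-(1+i) = N-i := by omega
            have e2 : 1+i-1 = i := by omega
            have e3 : 1+i = i+1 := by omega
            rw [e1, e2, e3]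
          · rw [qBinom_self q hq, Nat.sub_self, pow_zero, Nat.add_sub_cancel]
            ring
      _ = ∑ m ∈ Finset.range (N+1), q^(N+1) * z *
            ((-1)^m * q^(m*(m+1)/2) * qBinom q N m * qP q q m * z^m / qP (z*q) q (m+1)) := by
          apply Finset.sum_congr rfl
          intro m hm
          have hmN := Finset.mem_range.mp hm
          obtain ⟨k, rfl⟩ : ∃ k, N = m + k := ⟨N - m, by omega⟩
          have hD1 : qP (z*q) q (m+1) ≠ 0 :=
            qP_zq_ne_zero q z (m+1) (m+k+1) (by omega) hz
          have h4 : (1 : ℂ) - q * q^m ≠ 0 := by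
            have h := one_sub_q_pow_ne_zero q hq (m+1) (by omega); rwa [pow_succ'] at h
          rw [tri_succ, pow_add, qP_succ q q m, show q^(m+1) = q*q^m from pow_succ' q m]
          field_simp
          rw [Nat.add_sub_cancel_left]
          ring
      _ = q^(N+1) * z * (1 / (1 - z * q^(N+1))) := by
          rw [← Finset.mul_sum, keyL q hq N z hz]
      _ = z * q^(N+1) / (1 - z * q^(N+1)) := by ring
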